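/- Let Y be a nonnegative infinitely divisible random variable with drift c ≥ 0 and Lévy measure ρ on (0,∞) satisfying ∫ (y ∧ 1) ρ(dy) < ∞ and θ := E[Y] = c + ∫ y ρ(dy) ∈ (0,∞). Let Z be independent of Y with distribution L(Z)(dy) = (c/θ) δ_0(dy) + (y/θ) ρ(dy). Then for every bounded measurable f : R → R, E[f(Y + Z)] = E[f(Y) · Y/θ]. -/

import Mathlib

open MeasureTheory ProbabilityTheory Set Metric
open scoped ENNReal NNReal

/-- A finite measure with `μ (Iio 0) = 0` pushed forward by `x ↦ exp (-x)` is
concentrated on `Icc 0 1`. -/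
lemma map_exp_conc (μ : Measure ℝ) (hμ : μ (Set.Iio 0) = 0) :
    (μ.map fun x => Real.exp (-x)) (Set.Icc (0:ℝ) 1)ᶜ = 0 := by
  have hm : Measurable fun x : ℝ => Real.exp (-x) :=
    (Real.continuous_exp.comp continuous_neg).measurable
  rw [Measure.map_apply hm (measurableSet_Icc.compl)]
  refine measure_mono_null ?_ hμ
  intro x hx
  simp only [mem_preimage, mem_compl_iff, mem_Icc, not_and_or, not_le] at hx
  rcases hx with h | h
  · exact absurd (Real.exp_pos _).le (not_le.2 h)
  · simp only [mem_Iio]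
    by_contra hx0
    push_neg at hx0
    have : Real.exp (-x) ≤ 1 := Real.exp_le_one_iff.2 (by linarith)
    linarith

lemma laplace_ext (μ ν : Measure ℝ) [IsFiniteMeasure μ] [IsFiniteMeasure ν]
    (hμ : μ (Set.Iio 0) = 0) (hν : ν (Set.Iio 0) = 0)
    (h : ∀ α : ℝ, 0 ≤ α → ∫ x, Real.exp (-(α * x)) ∂μ = ∫ x, Real.exp (-(α * x)) ∂ν) :
    μ = ν := by
  have hm : Measurable fun x : ℝ => Real.exp (-x) :=
    (Real.continuous_exp.comp continuous_neg).measurable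
  set μ' := μ.map fun x => Real.exp (-x) with hμ'def
  set ν' := ν.map fun x => Real.exp (-x) with hν'def
  have hμ'fin : IsFiniteMeasure μ' := Measure.isFiniteMeasure_map _ _
  have hν'fin : IsFiniteMeasure ν' := Measure.isFiniteMeasure_map _ _
  have hμc : μ' (Set.Icc (0:ℝ) 1)ᶜ = 0 := map_exp_conc μ hμ
  have hνc : ν' (Set.Icc (0:ℝ) 1)ᶜ = 0 := map_exp_conc ν hν
  have hμae : ∀ᵐ t ∂μ', t ∈ Set.Icc (0:ℝ) 1 := by
    rw [ae_iff]; exact measure_mono_null (fun t ht => ht) hμc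
  have hνae : ∀ᵐ t ∂ν', t ∈ Set.Icc (0:ℝ) 1 := by
    rw [ae_iff]; exact measure_mono_null (fun t ht => ht) hνc
  -- integrability of continuous functions wrt μ', ν'
  have hint : ∀ (κ : Measure ℝ) (_ : IsFiniteMeasure κ)
      (_ : ∀ᵐ t ∂κ, t ∈ Set.Icc (0:ℝ) 1) (g : ℝ → ℝ), Continuous g → Integrable g κ := by
    intro κ hκfin hκae g hg
    obtain ⟨C, hC⟩ := (isCompact_Icc (a := (0:ℝ)) (b := 1)).exists_bound_of_continuousOn
      hg.continuousOn
    refine ⟨hg.aestronglyMeasurable, ?_⟩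
    apply HasFiniteIntegral.of_bounded (C := C)
    filter_upwards [hκae] with t ht using hC t ht
  -- moments agree
  have hmom : ∀ n : ℕ, ∫ t, t ^ n ∂μ' = ∫ t, t ^ n ∂ν' := by
    intro n
    have e1 : ∫ t, t ^ n ∂μ' = ∫ x, Real.exp (-((n:ℝ) * x)) ∂μ := by
      rw [hμ'def, integral_map hm.aemeasurable (by fun_prop)]
      refine integral_congr_ae (Filter.Eventually.of_forall fun x => ?_)
      show Real.exp (-x) ^ n = _
      rw [← Real.exp_nat_mul]; ring_nf
    have e2 : ∫ t, t ^ n ∂ν' = ∫ x, Real.exp (-((n:ℝ) * x)) ∂ν := by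
      rw [hν'def, integral_map hm.aemeasurable (by fun_prop)]
      refine integral_congr_ae (Filter.Eventually.of_forall fun x => ?_)
      show Real.exp (-x) ^ n = _
      rw [← Real.exp_nat_mul]; ring_nf
    rw [e1, e2]
    exact h n (Nat.cast_nonneg n)
  -- polynomials agree
  have hpoly : ∀ p : Polynomial ℝ, ∫ t, p.eval t ∂μ' = ∫ t, p.eval t ∂ν' := by
    intro p
    induction p using Polynomial.induction_on' with
    | add p q hp hq =>
      rw [show (fun t => (p + q).eval t) = fun t => p.eval t + q.eval t by
        funext t; simp [Polynomial.eval_add]]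
      rw [integral_add (hint μ' hμ'fin hμae _ p.continuous)
          (hint μ' hμ'fin hμae _ q.continuous),
        integral_add (hint ν' hν'fin hνae _ p.continuous)
          (hint ν' hν'fin hνae _ q.continuous), hp, hq]
    | monomial n a =>
      simp only [Polynomial.eval_monomial]
      rw [integral_const_mul, integral_const_mul, hmom n]
  -- continuous functions agree
  have hcont : ∀ g : ℝ → ℝ, Continuous g → ∫ t, g t ∂μ' = ∫ t, g t ∂ν' := by
    intro g hg
    set M : ℝ := (μ' Set.univ).toReal + (ν' Set.univ).toReal with hMdef
    have hM0 : 0 ≤ M := add_nonneg ENNReal.toReal_nonneg ENNReal.toReal_nonneg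
    have key : ∀ ε : ℝ, 0 < ε →
        |∫ t, g t ∂μ' - ∫ t, g t ∂ν'| ≤ ε * M := by
      intro ε hε
      set gc : C(Set.Icc (0:ℝ) 1, ℝ) :=
        ContinuousMap.restrict (Set.Icc (0:ℝ) 1) ⟨g, hg⟩ with hgc
      obtain ⟨p, hp_mem, hp_close⟩ :
          ∃ p ∈ (polynomialFunctions (Set.Icc (0:ℝ) 1) : Set C(Set.Icc (0:ℝ) 1, ℝ)),
            dist gc p < ε := by
        have htop := polynomialFunctions_closure_eq_top 0 1
        have hmem : gc ∈ (polynomialFunctions (Set.Icc (0:ℝ) 1)).topologicalClosure := by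
          rw [htop]; trivial
        have hcl : gc ∈ closure (polynomialFunctions (Set.Icc (0:ℝ) 1) :
            Set C(Set.Icc (0:ℝ) 1, ℝ)) := hmem
        exact Metric.mem_closure_iff.1 hcl ε hε
      rw [polynomialFunctions_coe] at hp_mem
      obtain ⟨q, hq⟩ := hp_mem
      have hqev : ∀ x : Set.Icc (0:ℝ) 1, p x = q.eval (x : ℝ) := by
        intro x; rw [← hq]; rfl
      have hbound : ∀ (κ : Measure ℝ) (_ : IsFiniteMeasure κ)
          (_ : ∀ᵐ t ∂κ, t ∈ Set.Icc (0:ℝ) 1),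
          |∫ t, g t ∂κ - ∫ t, q.eval t ∂κ| ≤ ε * (κ Set.univ).toReal := by
        intro κ hκfin hκae
        rw [← integral_sub (hint κ hκfin hκae g hg) (hint κ hκfin hκae _ q.continuous),
          ← Real.norm_eq_abs]
        refine norm_integral_le_of_norm_le_const ?_
        filter_upwards [hκae] with t ht
        have hd : dist (gc ⟨t, ht⟩) (p ⟨t, ht⟩) ≤ dist gc p := ContinuousMap.dist_apply_le_dist _
        rw [hqev ⟨t, ht⟩] at hd
        have hgct : gc ⟨t, ht⟩ = g t := rfl
        rw [hgct, Real.dist_eq] at hd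
        rw [Real.norm_eq_abs]
        exact hd.trans hp_close.le
      have h1 := hbound μ' hμ'fin hμae
      have h2 := hbound ν' hν'fin hνae
      have h3 := hpoly q
      have hD : ∫ t, g t ∂μ' - ∫ t, g t ∂ν'
          = (∫ t, g t ∂μ' - ∫ t, q.eval t ∂μ')
            - (∫ t, g t ∂ν' - ∫ t, q.eval t ∂ν') := by rw [← h3]; ring
      rw [hD, sub_eq_add_neg]
      refine (abs_add_le _ _).trans ?_
      rw [abs_neg, hMdef, mul_add]
      exact add_le_add h1 h2
    have : |∫ t, g t ∂μ' - ∫ t, g t ∂ν'| ≤ 0 := by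
      refine le_of_forall_pos_le_add (fun ε hε => ?_)
      have h' := key (ε / (M + 1)) (div_pos hε (by linarith))
      have hle : ε / (M + 1) * M ≤ ε := by
        rw [div_mul_eq_mul_div, div_le_iff₀ (by linarith)]
        nlinarith
      linarith
    have := abs_nonpos_iff.1 this
    linarith [sub_eq_zero.1 this]
  -- finite measures with equal integrals of bounded continuous functions coincide
  have hext : μ' = ν' := by
    refine ext_of_forall_lintegral_eq_of_IsFiniteMeasure (fun f => ?_)
    have hfc : Continuous fun t : ℝ => (f t : ℝ) := NNReal.continuous_coe.comp f.continuous
    rw [lintegral_coe_eq_integral _ (hint μ' hμ'fin hμae _ hfc),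
      lintegral_coe_eq_integral _ (hint ν' hν'fin hνae _ hfc), hcont _ hfc]
  -- recover μ and ν
  have hlog : Measurable fun t : ℝ => -Real.log t := Real.measurable_log.neg
  have hrec : ∀ κ : Measure ℝ,
      (κ.map fun x => Real.exp (-x)).map (fun t => -Real.log t) = κ := by
    intro κ
    rw [Measure.map_map hlog hm]
    have : ((fun t => -Real.log t) ∘ fun x => Real.exp (-x)) = id := by
      funext x; simp [Function.comp, Real.log_exp]
    rw [this, Measure.map_id]
  calc μ = (μ.map fun x => Real.exp (-x)).map (fun t => -Real.log t) := (hrec μ).symm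
    _ = (ν.map fun x => Real.exp (-x)).map (fun t => -Real.log t) := by
        rw [← hμ'def, ← hν'def, hext]
    _ = ν := hrec ν

lemma exp_deriv_aux (y : ℝ) (s : ℝ) :
    HasDerivAt (fun s : ℝ => Real.exp (-(s * y))) (-(y * Real.exp (-(s * y)))) s := by
  have h1 : HasDerivAt (fun s : ℝ => -(s * y)) (-y) s := (hasDerivAt_mul_const y).neg
  have := h1.exp
  convert this using 1
  ring

lemma one_sub_exp_le (t : ℝ) (ht : 0 ≤ t) : 1 - Real.exp (-t) ≤ t := by
  nlinarith [Real.add_one_le_exp (-t)]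

lemma key_deriv {Ω : Type*} [MeasurableSpace Ω] (P : Measure Ω) [IsProbabilityMeasure P]
    (Y : Ω → ℝ) (hYm : Measurable Y) (hYpos : ∀ ω, 0 ≤ Y ω) (hYint : Integrable Y P)
    (c : ℝ) (ρ : Measure ℝ) (hρae : ∀ᵐ y ∂ρ, 0 < y) (hyint : Integrable (fun y => y) ρ)
    (hL : ∀ s : ℝ, 0 < s → ∫ ω, Real.exp (-(s * Y ω)) ∂P =
      Real.exp (-(s * c) - ∫ y, (1 - Real.exp (-(s * y))) ∂ρ))
    (α : ℝ) (hα : 0 < α) :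
    ∫ ω, Y ω * Real.exp (-(α * Y ω)) ∂P =
      (c + ∫ y, y * Real.exp (-(α * y)) ∂ρ) * ∫ ω, Real.exp (-(α * Y ω)) ∂P := by
  set F : ℝ → ℝ := fun s => ∫ ω, Real.exp (-(s * Y ω)) ∂P with hF
  set G : ℝ → ℝ := fun s => ∫ y, (1 - Real.exp (-(s * y))) ∂ρ with hG
  have hεpos : 0 < α / 2 := by linarith
  -- derivative of F
  have hFd : HasDerivAt F (∫ ω, -(Y ω * Real.exp (-(α * Y ω))) ∂P) α := by
    refine (hasDerivAt_integral_of_dominated_loc_of_deriv_le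
      (F := fun s ω => Real.exp (-(s * Y ω)))
      (F' := fun s ω => -(Y ω * Real.exp (-(s * Y ω))))
      (bound := fun ω => |Y ω|) (μ := P) (x₀ := α) (ball_mem_nhds α hεpos)
      (Filter.Eventually.of_forall fun s => ?_) ?_ ?_ ?_ ?_ ?_).2
    · exact (Real.continuous_exp.measurable.comp ((measurable_const.mul hYm).neg)).aestronglyMeasurable
    · refine (integrable_const (1:ℝ)).mono'
        (Real.continuous_exp.measurable.comp ((measurable_const.mul hYm).neg)).aestronglyMeasurable
        (Filter.Eventually.of_forall fun ω => ?_)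
      rw [Real.norm_eq_abs, abs_of_pos (Real.exp_pos _)]
      exact Real.exp_le_one_iff.2 (by nlinarith [hYpos ω])
    · exact ((hYm.mul (Real.continuous_exp.measurable.comp
        ((measurable_const.mul hYm).neg))).neg).aestronglyMeasurable
    · refine Filter.Eventually.of_forall fun ω s hs => ?_
      have hs0 : 0 < s := by
        rw [mem_ball, Real.dist_eq] at hs
        cases abs_lt.1 hs; linarith
      rw [norm_neg, Real.norm_eq_abs, abs_mul, abs_of_pos (Real.exp_pos _)]
      have h1 : Real.exp (-(s * Y ω)) ≤ 1 := Real.exp_le_one_iff.2 (by nlinarith [hYpos ω])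
      nlinarith [abs_nonneg (Y ω), le_abs_self (Y ω), abs_nonneg (Y ω),
        Real.exp_pos (-(s * Y ω)), hYpos ω]
    · exact hYint.abs
    · exact Filter.Eventually.of_forall fun ω s _ => exp_deriv_aux (Y ω) s
  -- derivative of G
  have hGd : HasDerivAt G (∫ y, y * Real.exp (-(α * y)) ∂ρ) α := by
    have key := hasDerivAt_integral_of_dominated_loc_of_deriv_le
      (F := fun s y => 1 - Real.exp (-(s * y)))
      (F' := fun s y => y * Real.exp (-(s * y)))
      (bound := fun y => |y|) (μ := ρ) (x₀ := α) (ball_mem_nhds α hεpos)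
      (Filter.Eventually.of_forall fun s =>
        ((measurable_const.sub (Real.continuous_exp.measurable.comp
          ((measurable_const.mul measurable_id).neg))).aestronglyMeasurable))
      ?_ ?_ ?_ ?_ ?_
    · exact key.2
    · -- Integrable (fun y => 1 - exp (-(α*y)))
      refine (hyint.const_mul α).mono'
        ((measurable_const.sub (Real.continuous_exp.measurable.comp
          ((measurable_const.mul measurable_id).neg))).aestronglyMeasurable) ?_
      filter_upwards [hρae] with y hy
      have h0 : 0 ≤ α * y := by positivity
      have h1 : 1 - Real.exp (-(α * y)) ≤ α * y := one_sub_exp_le _ h0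
      have h2 : 0 ≤ 1 - Real.exp (-(α * y)) := by
        have := Real.exp_le_one_iff.2 (by linarith : -(α * y) ≤ 0); linarith
      rw [Real.norm_eq_abs, abs_of_nonneg h2]; exact h1
    · exact (measurable_id.mul (Real.continuous_exp.measurable.comp
        ((measurable_const.mul measurable_id).neg))).aestronglyMeasurable
    · filter_upwards [hρae] with y hy
      intro s hs
      have hs0 : 0 < s := by
        rw [mem_ball, Real.dist_eq] at hs
        cases abs_lt.1 hs; linarith
      rw [Real.norm_eq_abs, abs_mul, abs_of_pos (Real.exp_pos _)]
      have h1 : Real.exp (-(s * y)) ≤ 1 := Real.exp_le_one_iff.2 (by nlinarith)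
      nlinarith [abs_nonneg y, le_abs_self y, Real.exp_pos (-(s * y))]
    · exact hyint.abs
    · refine Filter.Eventually.of_forall fun y s _ => ?_
      have : HasDerivAt (fun s : ℝ => 1 - Real.exp (-(s * y))) (0 - -(y * Real.exp (-(s * y)))) s :=
        ((hasDerivAt_const s (1:ℝ)).sub (exp_deriv_aux y s))
      exact this.congr_deriv (by ring)
  -- H and comparison
  set H : ℝ → ℝ := fun s => Real.exp (-(s * c) - G s) with hH
  have hHd : HasDerivAt H ((-c - ∫ y, y * Real.exp (-(α * y)) ∂ρ) * H α) α := by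
    have h1 : HasDerivAt (fun s : ℝ => -(s * c) - G s)
        (-c - ∫ y, y * Real.exp (-(α * y)) ∂ρ) α := (hasDerivAt_mul_const c).neg.sub hGd
    have := h1.exp
    convert this using 1
    ring
  have hFH : F =ᶠ[nhds α] H := by
    filter_upwards [eventually_gt_nhds hα] with s hs
    exact hL s hs
  have hFd2 : HasDerivAt F ((-c - ∫ y, y * Real.exp (-(α * y)) ∂ρ) * H α) α :=
    hHd.congr_of_eventuallyEq hFH
  have huniq := hFd.unique hFd2
  rw [integral_neg] at huniq
  have hHF : H α = F α := (hL α hα).symm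
  rw [hHF] at huniq
  have : ∫ ω, Y ω * Real.exp (-(α * Y ω)) ∂P
      = (c + ∫ y, y * Real.exp (-(α * y)) ∂ρ) * F α := by linarith [huniq]
  · exact this


theorem size_biased_translation_identity {Ω : Type*} [MeasurableSpace Ω]
    (P : Measure Ω) [IsProbabilityMeasure P]
    (Y Z : Ω → ℝ) (hYm : Measurable Y) (hZm : Measurable Z)
    (hYpos : ∀ ω, 0 ≤ Y ω)
    (c θ : ℝ) (hc : 0 ≤ c) (hθpos : 0 < θ)
    (ρ : Measure ℝ) (hρneg : ρ (Set.Iic 0) = 0)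
    (hρmin : ∫⁻ y, ENNReal.ofReal (min y 1) ∂ρ < ⊤)
    (hρmean : ∫⁻ y, ENNReal.ofReal y ∂ρ < ⊤)
    (hθeq : θ = c + (∫⁻ y, ENNReal.ofReal y ∂ρ).toReal)
    (hEY : ∫ ω, Y ω ∂P = θ)
    (hLaplace : ∀ α : ℝ, 0 ≤ α →
      ∫ ω, Real.exp (-(α * Y ω)) ∂P =
        Real.exp (-(α * c) -
          (∫⁻ y, ENNReal.ofReal (1 - Real.exp (-(α * y))) ∂ρ).toReal))
    (hindep : IndepFun Y Z P)
    (hZlaw : P.map Z =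
      (ENNReal.ofReal (c / θ)) • Measure.dirac (0 : ℝ) +
        ρ.withDensity fun y => ENNReal.ofReal (y / θ)) :
    ∀ f : ℝ → ℝ, Measurable f → (∃ C, ∀ x, |f x| ≤ C) →
      ∫ ω, f (Y ω + Z ω) ∂P = ∫ ω, f (Y ω) * (Y ω / θ) ∂P := by
  intro f hfm hfb
  have hθne : θ ≠ 0 := hθpos.ne'
  -- Y is integrable
  have hYint : Integrable Y P := by
    by_contra h
    rw [integral_undef h] at hEY
    exact hθpos.ne' hEY.symm
  have hρae : ∀ᵐ y ∂ρ, 0 < y := by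
    rw [ae_iff]
    refine measure_mono_null (fun y hy => ?_) hρneg
    simp only [mem_setOf_eq, not_lt] at hy
    exact hy
  have hyint : Integrable (fun y => y) ρ := by
    refine ⟨measurable_id.aestronglyMeasurable, ?_⟩
    have heq : ∫⁻ y, (‖y‖₊ : ℝ≥0∞) ∂ρ = ∫⁻ y, ENNReal.ofReal y ∂ρ := by
      refine lintegral_congr_ae ?_
      filter_upwards [hρae] with y hy
      exact Real.enorm_eq_ofReal hy.le
    show ∫⁻ y, (‖y‖₊ : ℝ≥0∞) ∂ρ < ⊤
    rw [heq]; exact hρmean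
  -- Bochner form of the Laplace transform hypothesis
  have hLb : ∀ s : ℝ, 0 < s → ∫ ω, Real.exp (-(s * Y ω)) ∂P =
      Real.exp (-(s * c) - ∫ y, (1 - Real.exp (-(s * y))) ∂ρ) := by
    intro s hs
    rw [hLaplace s hs.le]
    congr 2
    rw [integral_eq_lintegral_of_nonneg_ae ?_ ?_]
    · filter_upwards [hρae] with y hy
      have : Real.exp (-(s * y)) ≤ 1 := Real.exp_le_one_iff.2 (by nlinarith)
      simp only [Pi.zero_apply]
      linarith
    · exact (measurable_const.sub (Real.continuous_exp.measurable.comp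
        ((measurable_const.mul measurable_id).neg))).aestronglyMeasurable
  have key := key_deriv P Y hYm hYpos hYint c ρ hρae hyint hLb
  -- the two measures to compare
  have hYZm : Measurable fun ω => Y ω + Z ω := hYm.add hZm
  set μ₁ : Measure ℝ := P.map (fun ω => Y ω + Z ω) with hμ₁
  set μY : Measure ℝ := P.map Y with hμY
  set μ₂ : Measure ℝ := μY.withDensity (fun x => ENNReal.ofReal (x / θ)) with hμ₂
  have hμ₁prob : IsProbabilityMeasure μ₁ := Measure.isProbabilityMeasure_map hYZm.aemeasurable
  have hμYprob : IsProbabilityMeasure μY := Measure.isProbabilityMeasure_map hYm.aemeasurable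
  -- Z is a.e. nonnegative
  have hZ0 : ∀ᵐ ω ∂P, 0 ≤ Z ω := by
    have h1 : P.map Z (Set.Iio 0) = 0 := by
      rw [hZlaw]
      simp only [Measure.add_apply, Measure.smul_apply, smul_eq_mul]
      rw [Measure.dirac_apply' _ measurableSet_Iio, withDensity_apply _ measurableSet_Iio]
      have hρIio : ρ (Set.Iio 0) = 0 := measure_mono_null Iio_subset_Iic_self hρneg
      rw [setLIntegral_measure_zero _ _ hρIio]
      simp
    rw [Measure.map_apply hZm measurableSet_Iio] at h1
    rw [ae_iff]
    refine measure_mono_null (fun ω hω => ?_) h1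
    simp only [mem_setOf_eq, not_le] at hω
    exact hω
  -- total mass of the density
  have hmassY : ∫⁻ x, ENNReal.ofReal (x / θ) ∂μY = 1 := by
    rw [hμY, lintegral_map (by fun_prop) hYm]
    rw [← ofReal_integral_eq_lintegral_ofReal (hYint.div_const θ)
      (Filter.Eventually.of_forall fun ω => by
        have := hYpos ω; positivity)]
    rw [integral_div, hEY, div_self hθne, ENNReal.ofReal_one]
  have hμ₂mass : μ₂ Set.univ = 1 := by
    rw [hμ₂, withDensity_apply _ MeasurableSet.univ, Measure.restrict_univ, hmassY]
  have hμ₂fin : IsFiniteMeasure μ₂ := ⟨by rw [hμ₂mass]; exact ENNReal.one_lt_top⟩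
  -- supports
  have hμ₁0 : μ₁ (Set.Iio 0) = 0 := by
    rw [hμ₁, Measure.map_apply hYZm measurableSet_Iio]
    have hae : ∀ᵐ ω ∂P, 0 ≤ Y ω + Z ω := by
      filter_upwards [hZ0] with ω h
      linarith [hYpos ω]
    rw [ae_iff] at hae
    refine measure_mono_null (fun ω hω => ?_) hae
    simp only [mem_preimage, mem_Iio] at hω
    simp only [mem_setOf_eq, not_le]
    exact hω
  have hμY0 : μY (Set.Iio 0) = 0 := by
    rw [hμY, Measure.map_apply hYm measurableSet_Iio]
    have : Y ⁻¹' Set.Iio 0 = ∅ := by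
      ext ω; simp only [mem_preimage, mem_Iio, mem_empty_iff_false, iff_false, not_lt]
      exact hYpos ω
    rw [this, measure_empty]
  have hμ₂0 : μ₂ (Set.Iio 0) = 0 := by
    rw [hμ₂, withDensity_apply _ measurableSet_Iio, setLIntegral_measure_zero _ _ hμY0]
  have hμYae : ∀ᵐ x ∂μY, 0 ≤ x := by
    rw [hμY, ae_map_iff hYm.aemeasurable (measurableSet_Ici (a := (0:ℝ)))]
    exact Filter.Eventually.of_forall hYpos
  haveI := hμ₁prob
  haveI := hμ₂fin
  have hexpm : ∀ α : ℝ, Measurable fun x : ℝ => Real.exp (-(α * x)) := fun α =>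
    Real.continuous_exp.measurable.comp ((measurable_const.mul measurable_id).neg)
  have hg : Measurable fun x : ℝ => Real.toNNReal (x / θ) :=
    (measurable_id.div_const θ).real_toNNReal
  have hofReal : (fun x : ℝ => ENNReal.ofReal (x / θ))
      = fun x => ((Real.toNNReal (x / θ) : ℝ≥0) : ℝ≥0∞) := rfl
  have hLap : ∀ α : ℝ, 0 ≤ α →
      ∫ x, Real.exp (-(α * x)) ∂μ₁ = ∫ x, Real.exp (-(α * x)) ∂μ₂ := by
    intro α hα
    have hRHS : ∫ x, Real.exp (-(α * x)) ∂μ₂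
        = (∫ ω, Y ω * Real.exp (-(α * Y ω)) ∂P) / θ := by
      rw [hμ₂, hofReal, integral_withDensity_eq_integral_smul hg]
      have heq1 : ∫ x, Real.toNNReal (x / θ) • Real.exp (-(α * x)) ∂μY
          = ∫ x, x * Real.exp (-(α * x)) / θ ∂μY := by
        refine integral_congr_ae ?_
        filter_upwards [hμYae] with x hx
        rw [NNReal.smul_def, smul_eq_mul, Real.coe_toNNReal _ (by positivity)]
        ring
      rw [heq1, hμY, integral_map hYm.aemeasurable
        (show Measurable fun x : ℝ => x * Real.exp (-(α * x)) / θ from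
          (measurable_id.mul (hexpm α)).div_const θ).aestronglyMeasurable, integral_div]
    rcases eq_or_lt_of_le hα with heq|hpos
    · rw [hRHS, ← heq]
      simp only [zero_mul, neg_zero, Real.exp_zero, mul_one]
      rw [hEY, div_self hθne, integral_const, probReal_univ, smul_eq_mul,
        mul_one]
    · have hYexp_int : Integrable (fun ω => Real.exp (-(α * Y ω))) P := by
        refine (integrable_const (1:ℝ)).mono' ((hexpm α).comp hYm).aestronglyMeasurable
          (Filter.Eventually.of_forall fun ω => ?_)
        rw [Real.norm_eq_abs, abs_of_pos (Real.exp_pos _)]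
        exact Real.exp_le_one_iff.2 (by nlinarith [hYpos ω])
      have hZexp_int : Integrable (fun ω => Real.exp (-(α * Z ω))) P := by
        refine (integrable_const (1:ℝ)).mono' ((hexpm α).comp hZm).aestronglyMeasurable ?_
        filter_upwards [hZ0] with ω hω
        rw [Real.norm_eq_abs, abs_of_pos (Real.exp_pos _)]
        exact Real.exp_le_one_iff.2 (by nlinarith)
      have hLHS : ∫ x, Real.exp (-(α * x)) ∂μ₁
          = (∫ ω, Real.exp (-(α * Y ω)) ∂P) * ∫ ω, Real.exp (-(α * Z ω)) ∂P := by
        rw [hμ₁, integral_map hYZm.aemeasurable ((hexpm α).aestronglyMeasurable)]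
        have heq2 : (fun ω => Real.exp (-(α * (Y ω + Z ω))))
            = fun ω => Real.exp (-(α * Y ω)) * Real.exp (-(α * Z ω)) := by
          funext ω; rw [← Real.exp_add]; ring_nf
        rw [heq2]
        exact hindep.integral_fun_comp_mul_comp hYm.aemeasurable hZm.aemeasurable
          (hexpm α).aestronglyMeasurable (hexpm α).aestronglyMeasurable
      have hρint : Integrable (fun y => y * Real.exp (-(α * y))) ρ := by
        refine hyint.mono' ((measurable_id.mul (hexpm α)).aestronglyMeasurable) ?_
        filter_upwards [hρae] with y hy
        rw [Real.norm_eq_abs, abs_mul, abs_of_pos (Real.exp_pos _), abs_of_pos hy]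
        nlinarith [Real.exp_le_one_iff.2 (by nlinarith : -(α * y) ≤ 0), Real.exp_pos (-(α*y))]
      have hZexp : ∫ ω, Real.exp (-(α * Z ω)) ∂P
          = c / θ + (∫ y, y * Real.exp (-(α * y)) ∂ρ) / θ := by
        rw [← integral_map hZm.aemeasurable ((hexpm α).aestronglyMeasurable), hZlaw]
        have hdint : Integrable (fun x => Real.exp (-(α * x))) (Measure.dirac (0:ℝ)) := by
          refine ⟨(hexpm α).aestronglyMeasurable, ?_⟩
          show ∫⁻ x, _ ∂_ < ⊤
          rw [lintegral_dirac]
          exact ENNReal.coe_lt_top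
        have hwd_int : Integrable (fun x => Real.exp (-(α * x)))
            (ρ.withDensity fun y => ENNReal.ofReal (y / θ)) := by
          rw [hofReal, integrable_withDensity_iff_integrable_smul hg]
          refine (hρint.div_const θ).mono' (hg.smul (hexpm α)).aestronglyMeasurable ?_
          filter_upwards [hρae] with y hy
          rw [NNReal.smul_def, smul_eq_mul, Real.coe_toNNReal _ (by positivity),
            Real.norm_eq_abs, abs_mul, abs_of_pos (Real.exp_pos _),
            abs_of_pos (by positivity : (0:ℝ) < y / θ)]
          exact le_of_eq (by ring)
        rw [integral_add_measure (hdint.smul_measure ENNReal.ofReal_ne_top) hwd_int,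
          integral_smul_measure, integral_dirac]
        simp only [mul_zero, neg_zero, Real.exp_zero]
        congr 1
        · rw [ENNReal.toReal_ofReal (by positivity), smul_eq_mul, mul_one]
        · rw [hofReal, integral_withDensity_eq_integral_smul hg, ← integral_div]
          refine integral_congr_ae ?_
          filter_upwards [hρae] with y hy
          rw [NNReal.smul_def, smul_eq_mul, Real.coe_toNNReal _ (by positivity)]
          ring
      rw [hLHS, hZexp, hRHS, key α hpos]
      field_simp
  have hμeq : μ₁ = μ₂ := laplace_ext μ₁ μ₂ hμ₁0 hμ₂0 hLap
  calc ∫ ω, f (Y ω + Z ω) ∂P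
      = ∫ x, f x ∂μ₁ := (integral_map hYZm.aemeasurable hfm.aestronglyMeasurable).symm
    _ = ∫ x, f x ∂μ₂ := by rw [hμeq]
    _ = ∫ x, f x * (x / θ) ∂μY := by
        rw [hμ₂, hofReal, integral_withDensity_eq_integral_smul hg]
        refine integral_congr_ae ?_
        filter_upwards [hμYae] with x hx
        rw [NNReal.smul_def, smul_eq_mul, Real.coe_toNNReal _ (by positivity)]
        ring
    _ = ∫ ω, f (Y ω) * (Y ω / θ) ∂P := by
        rw [hμY, integral_map hYm.aemeasurable
          (show Measurable fun x : ℝ => f x * (x / θ) from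
            hfm.mul (measurable_id.div_const θ)).aestronglyMeasurable]
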